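/- For every prefix-free machine C there exists a prefix-free machine D such that: (i) H_D(s) = H_C(s) for every finite binary string s (equality in ℕ ∪ {∞}); (ii) D⁻¹(s) = {p : D(p) = s} is a finite set for every s; and (iii) there exists a partial recursive function f : {0,1}* →. ℕ⁺ such that the domain of f equals {s : D⁻¹(s) ≠ ∅} and #D⁻¹(s) ≤ f(s) for every s in the domain of f. -/

import Mathlib

open scoped ENNReal

/-- A set of binary strings is prefix-free: no element is a proper prefix of another. -/
def PrefixFreeSet (S : Set (List Bool)) : Prop :=
  ∀ p ∈ S, ∀ q ∈ S, p <+: q → p = q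

/-- A prefix-free machine: a partial recursive function on binary strings
whose domain is a prefix-free set. -/
def PFMachine (C : List Bool →. List Bool) : Prop :=
  Partrec C ∧ PrefixFreeSet C.Dom

/-- `Hm C s` is the length of a shortest program `p` with `C p = s` (`∞` if none). -/
noncomputable def Hm (C : List Bool →. List Bool) (s : List Bool) : ℕ∞ :=
  sInf ((fun p : List Bool => (p.length : ℕ∞)) '' {p | s ∈ C p})

/-- An optimal prefix-free machine: for every prefix-free machine `C` there is `d ∈ ℕ`
such that every `p ∈ dom C` has a `q` with `U q = C p` and `|q| ≤ |p| + d`. -/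
def OptimalPFM (U : List Bool →. List Bool) : Prop :=
  PFMachine U ∧ ∀ C : List Bool →. List Bool, PFMachine C →
    ∃ d : ℕ, ∀ p s, s ∈ C p → ∃ q : List Bool, s ∈ U q ∧ q.length ≤ p.length + d

/-- The binary string identified with `n : ℕ` via `φ(s) = (the dyadic integer 1s) − 1`. -/
def strOfNat (n : ℕ) : List Bool := ((n + 1).bits.dropLast).reverse


namespace EMFF

open Nat.Partrec (Code)
open Nat.Partrec.Code Encodable

/-- least `m < k` with `p m = true` -/
def lfind (p : ℕ → Bool) : ℕ → Option ℕ :=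
  Nat.rec none fun k ih => bif ih.isSome then ih else bif p k then some k else none

theorem lfind_succ (p : ℕ → Bool) (k : ℕ) :
    lfind p (k + 1) = bif (lfind p k).isSome then lfind p k
      else bif p k then some k else none := rfl

theorem lfind_spec (p : ℕ → Bool) (k : ℕ) :
    (lfind p k = none ∧ ∀ j < k, p j = false) ∨
      ∃ m, lfind p k = some m ∧ m < k ∧ p m = true ∧ ∀ j < m, p j = false := by
  induction k with
  | zero => exact Or.inl ⟨rfl, fun j hj => absurd hj (Nat.not_lt_zero j)⟩
  | succ k ih =>
    rcases ih with ⟨h0, hall⟩ | ⟨m, hm, hlt, hp, hmin⟩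
    · rw [lfind_succ, h0]
      cases hp : p k with
      | false =>
        refine Or.inl ⟨rfl, fun j hj => ?_⟩
        rcases Nat.lt_succ_iff_lt_or_eq.mp hj with h | rfl
        · exact hall j h
        · exact hp
      | true => exact Or.inr ⟨k, rfl, Nat.lt_succ_self k, hp, hall⟩
    · rw [lfind_succ, hm]
      exact Or.inr ⟨m, rfl, Nat.lt_succ_of_lt hlt, hp, hmin⟩

theorem lfind_eq_none {p : ℕ → Bool} {k : ℕ} :
    lfind p k = none ↔ ∀ j < k, p j = false := by
  rcases lfind_spec p k with ⟨h0, hall⟩ | ⟨m, hm, hlt, hp, _⟩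
  · exact ⟨fun _ => hall, fun _ => h0⟩
  · rw [hm]
    constructor
    · intro h; exact absurd h (by simp)
    · intro h; exact absurd (h m hlt) (by simp [hp])

theorem lfind_eq_some {p : ℕ → Bool} {k m : ℕ} (h : lfind p k = some m) :
    m < k ∧ p m = true ∧ ∀ j < m, p j = false := by
  rcases lfind_spec p k with ⟨h0, _⟩ | ⟨m', hm', hlt, hp, hmin⟩
  · simp [h0] at h
  · rw [hm'] at h; cases Option.some_inj.mp h; exact ⟨hlt, hp, hmin⟩

theorem lfind_primrec {α} [Primcodable α] {q : α → ℕ → Bool} (hq : Primrec₂ q) :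
    Primrec₂ fun a k => lfind (q a) k := by
  have : Primrec₂ fun (a : α × ℕ) (y : ℕ × Option ℕ) =>
      bif y.2.isSome then y.2 else bif q a.1 y.1 then some y.1 else none :=
    (Primrec.cond (Primrec.option_isSome.comp (Primrec.snd.comp Primrec.snd))
      (Primrec.snd.comp Primrec.snd)
      (Primrec.cond (hq.comp (Primrec.fst.comp Primrec.fst) (Primrec.fst.comp Primrec.snd))
        (Primrec.option_some.comp (Primrec.fst.comp Primrec.snd))
        (Primrec.const none))).to₂
  exact (Primrec.nat_rec' Primrec.snd (Primrec.const none) this).to₂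

/-- the string with code `n` (default `[]`) -/
def strN (n : ℕ) : List Bool := (Encodable.decode (α := List Bool) n).getD []

theorem strN_encode (p : List Bool) : strN (encode p) = p := by
  simp [strN, Encodable.encodek]

theorem strN_primrec : Primrec strN :=
  Primrec.option_getD.comp Primrec.decode (Primrec.const [])

/-- `n` is the canonical code of the string it denotes. -/
def Canon (n : ℕ) : Prop := encode (strN n) = n

theorem canon_encode (p : List Bool) : Canon (encode p) := by
  simp [Canon, strN_encode]

/-- acceptance test: no "earlier" (w.r.t. discovery order) canonical program computing the
same value `v` has length `≤` that of the candidate `n`; `k` is the discovery stage of `n`. -/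
def accb (c : Code) (k n v : ℕ) : Bool :=
  !(lfind (fun m => (decide (evaln k c m = some v)) &&
      decide (encode (strN m) = m) &&
      ((evaln (k-1) c m).isSome || decide (m < n)) &&
      decide ((strN m).length ≤ (strN n).length)) k).isSome

def gD (c : Code) (n k : ℕ) : Option ℕ :=
  (evaln k c n).bind fun v => bif accb c k n v then some v else none

/-- the machine `D` -/
def Dm (c : Code) : List Bool →. List Bool :=
  fun p => (Nat.rfindOpt (gD c (encode p))).map strN

def gF (c : Code) (v k : ℕ) : Option ℕ :=
  (lfind (fun m => decide (evaln k c m = some v) && decide (encode (strN m) = m)) k).map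
    fun m => (strN m).length + 1

/-- the counting function `f` -/
def Fm (c : Code) : List Bool →. ℕ := fun s => Nat.rfindOpt (gF c (encode s))

theorem evaln_primrec (c : Code) : Primrec₂ fun k m => evaln k c m :=
  (primrec_evaln.comp (Primrec.pair (Primrec.pair Primrec.fst (Primrec.const c))
    Primrec.snd)).to₂

theorem canon_primrec : Primrec fun m => decide (encode (strN m) = m) :=
  (Primrec.eq.comp (Primrec.encode.comp strN_primrec) Primrec.id).decide

theorem accb_primrec (c : Code) : Primrec fun y : (ℕ × ℕ) × ℕ => accb c y.1.2 y.1.1 y.2 := by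
  have hq : Primrec₂ fun (y : (ℕ × ℕ) × ℕ) (m : ℕ) =>
      (decide (evaln y.1.2 c m = some y.2)) &&
      decide (encode (strN m) = m) &&
      ((evaln (y.1.2 - 1) c m).isSome || decide (m < y.1.1)) &&
      decide ((strN m).length ≤ (strN y.1.1).length) := by
    have hk : Primrec fun x : ((ℕ × ℕ) × ℕ) × ℕ => x.1.1.2 :=
      Primrec.snd.comp (Primrec.fst.comp Primrec.fst)
    have hn : Primrec fun x : ((ℕ × ℕ) × ℕ) × ℕ => x.1.1.1 :=
      Primrec.fst.comp (Primrec.fst.comp Primrec.fst)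
    have hv : Primrec fun x : ((ℕ × ℕ) × ℕ) × ℕ => x.1.2 :=
      Primrec.snd.comp Primrec.fst
    have hm : Primrec fun x : ((ℕ × ℕ) × ℕ) × ℕ => x.2 := Primrec.snd
    have h1 : Primrec fun x : ((ℕ × ℕ) × ℕ) × ℕ =>
        decide (evaln x.1.1.2 c x.2 = some x.1.2) :=
      (Primrec.eq.comp ((evaln_primrec c).comp hk hm) (Primrec.option_some.comp hv)).decide
    have h1' : Primrec fun x : ((ℕ × ℕ) × ℕ) × ℕ => decide (encode (strN x.2) = x.2) :=
      canon_primrec.comp hm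
    have h2 : Primrec fun x : ((ℕ × ℕ) × ℕ) × ℕ =>
        ((evaln (x.1.1.2 - 1) c x.2).isSome || decide (x.2 < x.1.1.1)) :=
      (Primrec.dom_bool₂ (· || ·)).comp
        (Primrec.option_isSome.comp ((evaln_primrec c).comp
          (Primrec.nat_sub.comp hk (Primrec.const 1)) hm))
        (Primrec.nat_lt.comp hm hn).decide
    have h3 : Primrec fun x : ((ℕ × ℕ) × ℕ) × ℕ =>
        decide ((strN x.2).length ≤ (strN x.1.1.1).length) :=
      (Primrec.nat_le.comp
        (Primrec.list_length.comp (strN_primrec.comp hm))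
        (Primrec.list_length.comp (strN_primrec.comp hn))).decide
    exact ((Primrec.dom_bool₂ (· && ·)).comp
      ((Primrec.dom_bool₂ (· && ·)).comp
        ((Primrec.dom_bool₂ (· && ·)).comp h1 h1') h2) h3).to₂
  exact (Primrec.dom_bool (!·)).comp (Primrec.option_isSome.comp
    ((lfind_primrec hq).comp Primrec.id (Primrec.snd.comp Primrec.fst)))

theorem gD_primrec (c : Code) : Primrec₂ (gD c) := by
  have h1 : Primrec fun x : ℕ × ℕ => evaln x.2 c x.1 :=
    (evaln_primrec c).comp Primrec.snd Primrec.fst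
  have h2 : Primrec₂ fun (x : ℕ × ℕ) (v : ℕ) => bif accb c x.2 x.1 v then some v else none :=
    (Primrec.cond ((accb_primrec c).comp
        (Primrec.pair (Primrec.pair (Primrec.fst.comp Primrec.fst)
          (Primrec.snd.comp Primrec.fst)) Primrec.snd))
      (Primrec.option_some.comp Primrec.snd) (Primrec.const none)).to₂
  exact (Primrec.option_bind h1 h2).to₂

theorem gF_primrec (c : Code) : Primrec₂ (gF c) := by
  have hq : Primrec₂ fun (x : ℕ × ℕ) (m : ℕ) =>
      decide (evaln x.2 c m = some x.1) && decide (encode (strN m) = m) :=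
    ((Primrec.dom_bool₂ (· && ·)).comp
      (Primrec.eq.comp ((evaln_primrec c).comp (Primrec.snd.comp Primrec.fst) Primrec.snd)
        (Primrec.option_some.comp (Primrec.fst.comp Primrec.fst))).decide
      (canon_primrec.comp Primrec.snd)).to₂
  have h1 : Primrec fun x : ℕ × ℕ =>
      lfind (fun m => decide (evaln x.2 c m = some x.1) && decide (encode (strN m) = m)) x.2 :=
    (lfind_primrec hq).comp Primrec.id Primrec.snd
  exact (Primrec.option_map h1 ((Primrec.succ.comp (Primrec.list_length.comp
    (strN_primrec.comp Primrec.snd))).to₂)).to₂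

theorem Dm_partrec (c : Code) : Partrec (Dm c) := by
  have h1 : Computable₂ fun (p : List Bool) (k : ℕ) => gD c (encode p) k :=
    ((gD_primrec c).to_comp.comp
      (Computable.encode.comp Computable.fst) Computable.snd).to₂
  exact (Partrec.rfindOpt h1).map
    ((strN_primrec.to_comp.comp Computable.snd).to₂)

theorem Fm_partrec (c : Code) : Partrec (Fm c) :=
  Partrec.rfindOpt (((gF_primrec c).to_comp.comp
    (Computable.encode.comp Computable.fst) Computable.snd).to₂)

end EMFF

namespace EMFF
open Nat.Partrec (Code)
open Nat.Partrec.Code Encodable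

/-- first stage at which code `n` halts -/
noncomputable def tN (c : Code) (n : ℕ) : ℕ := sInf {k | (evaln k c n).isSome}

/-- code `n` is a canonical code halting with value `v` -/
def HaltV (c : Code) (v n : ℕ) : Prop := (∃ k, evaln k c n = some v) ∧ Canon n

/-- discovery order on halting codes -/
def Prec (c : Code) (m n : ℕ) : Prop := tN c m < tN c n ∨ (tN c m = tN c n ∧ m < n)

theorem prec_total {c : Code} {m n : ℕ} (h : m ≠ n) : Prec c m n ∨ Prec c n m := by
  unfold Prec
  rcases lt_trichotomy (tN c m) (tN c n) with h' | h' | h' <;> rcases lt_or_gt_of_ne h <;> omega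

theorem tN_le {c : Code} {k n v : ℕ} (h : evaln k c n = some v) : tN c n ≤ k :=
  Nat.sInf_le (by simp [Set.mem_setOf_eq, h])

theorem evaln_tN {c : Code} {k n v : ℕ} (h : evaln k c n = some v) :
    evaln (tN c n) c n = some v := by
  have hne : {k | (evaln k c n).isSome}.Nonempty := ⟨k, by simp [h]⟩
  have h1 := Nat.sInf_mem hne
  rw [Set.mem_setOf_eq, Option.isSome_iff_exists] at h1
  obtain ⟨v', hv'⟩ := h1
  have h2 : v' ∈ evaln k c n := evaln_mono (tN_le h) (Option.mem_def.mpr hv')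
  rw [Option.mem_def, h, Option.some_inj] at h2
  rw [h2]; exact hv'

theorem accb_true_iff {c : Code} {k n v : ℕ} : accb c k n v = true ↔
    ∀ m, m < k → evaln k c m = some v → Canon m →
      ((evaln (k - 1) c m).isSome = true ∨ m < n) →
      (strN n).length < (strN m).length := by
  have h0 : accb c k n v = true ↔
      (lfind (fun m => (decide (evaln k c m = some v)) &&
        decide (encode (strN m) = m) &&
        ((evaln (k-1) c m).isSome || decide (m < n)) &&
        decide ((strN m).length ≤ (strN n).length)) k) = none := by
    rw [accb]
    cases hfl : lfind (fun m => (decide (evaln k c m = some v)) &&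
        decide (encode (strN m) = m) &&
        ((evaln (k-1) c m).isSome || decide (m < n)) &&
        decide ((strN m).length ≤ (strN n).length)) k <;> simp [hfl]
  rw [h0, lfind_eq_none]
  apply forall_congr'
  intro m
  apply imp_congr_right
  intro hm
  rw [← Bool.not_eq_true]
  simp only [Bool.and_eq_true, Bool.or_eq_true, decide_eq_true_eq]
  constructor
  · intro hnot h1 h2 h3
    by_contra hc
    exact hnot ⟨⟨⟨h1, h2⟩, h3⟩, not_lt.mp hc⟩
  · intro himp hcon
    obtain ⟨⟨⟨h1, h2⟩, h3⟩, h4⟩ := hcon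
    exact absurd h4 (not_le.mpr (himp h1 h2 h3))

theorem accb_false_of_lt {c : Code} {k n v : ℕ} (hcn : Canon n) (hlt : tN c n < k)
    (h : evaln k c n = some v) : accb c k n v = false := by
  by_contra hb
  have hb' : accb c k n v = true := by revert hb; cases accb c k n v <;> simp
  have hnk : n < k := evaln_bound (Option.mem_def.mpr h)
  have hsm : (evaln (k - 1) c n).isSome = true := by
    have h1 : evaln (tN c n) c n = some v := evaln_tN h
    have h2 : v ∈ evaln (k-1) c n :=
      evaln_mono (by omega) (Option.mem_def.mpr h1)
    simp [Option.mem_def.mp h2]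
  exact absurd (accb_true_iff.mp hb' n hnk h hcn (Or.inl hsm)) (lt_irrefl _)

theorem mem_rfindOpt_iff {α : Type*} {f : ℕ → Option α} {a : α} :
    a ∈ Nat.rfindOpt f ↔ ∃ k, f k = some a ∧ ∀ j < k, f j = none := by
  constructor
  · intro h
    rw [Nat.rfindOpt, Part.mem_bind_iff] at h
    obtain ⟨k, hk, hfk⟩ := h
    replace hk := Nat.mem_rfind.mp hk
    refine ⟨k, ?_, fun j hj => ?_⟩
    · simpa [Part.mem_ofOption, Option.mem_def] using hfk
    · have h5 : (f j).isSome = false := by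
        simpa [PFun.coe_val, Part.mem_some_iff] using hk.2 hj
      exact Option.not_isSome_iff_eq_none.mp (by simp [h5])
  · rintro ⟨k, hk, hmin⟩
    rw [Nat.rfindOpt, Part.mem_bind_iff]
    refine ⟨k, ?_, by simp [Part.mem_ofOption, Option.mem_def, hk]⟩
    refine Nat.mem_rfind.mpr ?_
    constructor
    · simp [PFun.coe_val, Part.mem_some_iff, hk]
    · intro j hj
      simp [PFun.coe_val, Part.mem_some_iff, hmin j hj]

/-- pure-code characterization of membership in `Dm` -/
theorem mem_Dm_iff' {c : Code} {p s : List Bool} :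
    s ∈ Dm c p ↔ ∃ v, evaln (tN c (encode p)) c (encode p) = some v ∧
      accb c (tN c (encode p)) (encode p) v = true ∧ s = strN v := by
  constructor
  · intro h
    rw [Dm, Part.mem_map_iff] at h
    obtain ⟨v, hv, rfl⟩ := h
    rw [mem_rfindOpt_iff] at hv
    obtain ⟨k, hk, hmin⟩ := hv
    rw [gD] at hk
    obtain ⟨w, hw, hcond⟩ := Option.bind_eq_some_iff.mp hk
    have hacc : accb c k (encode p) w = true ∧ w = v := by
      cases hacc' : accb c k (encode p) w <;> rw [hacc'] at hcond <;>
        simp only [cond_false, cond_true] at hcond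
      · exact absurd hcond (by simp)
      · exact ⟨rfl, Option.some_inj.mp hcond⟩
    obtain ⟨hacc, rfl⟩ := hacc
    have hkt : tN c (encode p) = k := by
      refine le_antisymm (tN_le hw) ?_
      by_contra hlt
      push_neg at hlt
      exact absurd hacc (by simp [accb_false_of_lt (canon_encode p) hlt hw])
    rw [hkt]
    exact ⟨w, hw, hacc, rfl⟩
  · rintro ⟨v, hev, hacc, rfl⟩
    rw [Dm, Part.mem_map_iff]
    refine ⟨v, ?_, rfl⟩
    rw [mem_rfindOpt_iff]
    refine ⟨tN c (encode p), ?_, fun j hj => ?_⟩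
    · rw [gD, hev]; simp [hacc]
    · rw [gD]
      cases hj' : evaln j c (encode p) with
      | none => rfl
      | some w => exact absurd (tN_le hj') (by omega)

theorem earlier_prec {c : Code} {n m w : ℕ} (hm : m < tN c n)
    (hev : evaln (tN c n) c m = some w)
    (hearly : (evaln (tN c n - 1) c m).isSome = true ∨ m < n) : Prec c m n := by
  have hle : tN c m ≤ tN c n := tN_le hev
  rcases hearly with hs | hlt
  · left
    rw [Option.isSome_iff_exists] at hs
    obtain ⟨w', hw'⟩ := hs
    have := tN_le hw'
    omega
  · by_cases heq : tN c m = tN c n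
    · exact Or.inr ⟨heq, hlt⟩
    · exact Or.inl (by omega)

theorem accb_of {c : Code} {n v : ℕ}
    (h : ∀ m, HaltV c v m → Prec c m n → (strN n).length < (strN m).length) :
    accb c (tN c n) n v = true :=
  accb_true_iff.mpr fun m hmk hev hcan hearly =>
    h m ⟨⟨_, hev⟩, hcan⟩ (earlier_prec hmk hev hearly)

theorem acc_length_lt {c : Code} {n v m : ℕ}
    (hacc : accb c (tN c n) n v = true) (hm : HaltV c v m) (hprec : Prec c m n) :
    (strN n).length < (strN m).length := by
  obtain ⟨⟨j, hj⟩, hcanm⟩ := hm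
  have h1 : evaln (tN c m) c m = some v := evaln_tN hj
  have hle : tN c m ≤ tN c n := by rcases hprec with h | h <;> omega
  have h2 : v ∈ evaln (tN c n) c m := evaln_mono hle (Option.mem_def.mpr h1)
  have h3 : m < tN c n := lt_of_lt_of_le (evaln_bound (Option.mem_def.mpr h1)) hle
  refine accb_true_iff.mp hacc m h3 (Option.mem_def.mp h2) hcanm ?_
  rcases hprec with hlt | ⟨heq, hltm⟩
  · left
    have h4 : v ∈ evaln (tN c n - 1) c m := evaln_mono (by omega) (Option.mem_def.mpr h1)
    simp [Option.mem_def.mp h4]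
  · right; exact hltm

theorem exists_prec_min {c : Code} {S : Set ℕ} (hS : S.Nonempty) :
    ∃ n ∈ S, ∀ m ∈ S, ¬ Prec c m n := by
  have h1 : (tN c '' S).Nonempty := hS.image _
  obtain ⟨n', hn'S, hn't⟩ := Nat.sInf_mem h1
  have h2 : {n | n ∈ S ∧ tN c n = sInf (tN c '' S)}.Nonempty := ⟨n', hn'S, hn't⟩
  obtain ⟨hn₀S, hn₀t⟩ := Nat.sInf_mem h2
  refine ⟨sInf {n | n ∈ S ∧ tN c n = sInf (tN c '' S)}, hn₀S, fun m hm hprec => ?_⟩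
  have h3 : sInf (tN c '' S) ≤ tN c m := Nat.sInf_le ⟨m, hm, rfl⟩
  rcases hprec with h | ⟨h1', h2'⟩
  · omega
  · have : sInf {n | n ∈ S ∧ tN c n = sInf (tN c '' S)} ≤ m :=
      Nat.sInf_le ⟨hm, by omega⟩
    omega

theorem mem_Dm_of_prec_min {c : Code} {s : List Bool} {n : ℕ}
    (h1 : HaltV c (encode s) n) (h2 : ∀ m, HaltV c (encode s) m → ¬Prec c m n) :
    s ∈ Dm c (strN n) := by
  obtain ⟨⟨k, hk⟩, hcan⟩ := h1
  have hcn : encode (strN n) = n := hcan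
  rw [mem_Dm_iff', hcn]
  exact ⟨encode s, evaln_tN hk,
    accb_of fun m hm hp => absurd hp (h2 m hm), (strN_encode s).symm⟩

theorem Fm_spec {c : Code} {s : List Bool} {a : ℕ} (h : a ∈ Fm c s) :
    ∃ n, HaltV c (encode s) n ∧ (∀ m, HaltV c (encode s) m → ¬Prec c m n) ∧
      a = (strN n).length + 1 := by
  rw [Fm, mem_rfindOpt_iff] at h
  obtain ⟨k, hk, hmin⟩ := h
  rw [gF] at hk
  obtain ⟨m₀, hl, ha⟩ := Option.map_eq_some_iff.mp hk
  obtain ⟨hm₀k, hpm, hminm⟩ := lfind_eq_some hl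
  simp only [Bool.and_eq_true, decide_eq_true_eq] at hpm
  obtain ⟨hev, hcan⟩ := hpm
  refine ⟨m₀, ⟨⟨k, hev⟩, hcan⟩, ?_, ha.symm⟩
  have htm : tN c m₀ = k := by
    refine le_antisymm (tN_le hev) ?_
    by_contra hlt
    push_neg at hlt
    have h1 : evaln (tN c m₀) c m₀ = some (encode s) := evaln_tN hev
    have h2 : m₀ < tN c m₀ := evaln_bound (Option.mem_def.mpr h1)
    have h3 := hmin (tN c m₀) hlt
    rw [gF, Option.map_eq_none_iff, lfind_eq_none] at h3
    have := h3 m₀ h2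
    simp [h1, hcan] at this
  intro m hm hprec
  obtain ⟨⟨j, hj⟩, hcanm⟩ := hm
  rcases hprec with hlt | ⟨heq, hltm⟩
  · have h1 : evaln (tN c m) c m = some (encode s) := evaln_tN hj
    have h2 : m < tN c m := evaln_bound (Option.mem_def.mpr h1)
    have h3 := hmin (tN c m) (by omega)
    rw [gF, Option.map_eq_none_iff, lfind_eq_none] at h3
    have hcanm' : encode (strN m) = m := hcanm
    have := h3 m h2
    simp [h1, hcanm'] at this
  · have h1 : evaln k c m = some (encode s) := by
      have := evaln_mono (le_of_eq (heq.trans htm)) (Option.mem_def.mpr (evaln_tN hj))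
      exact Option.mem_def.mp this
    have hcanm' : encode (strN m) = m := hcanm
    have := hminm m hltm
    simp [h1, hcanm'] at this

theorem Fm_dom_of {c : Code} {s : List Bool} {n : ℕ} (h : HaltV c (encode s) n) :
    (Fm c s).Dom := by
  rw [Fm, Nat.rfindOpt_dom]
  obtain ⟨⟨k, hk⟩, hcan⟩ := h
  have h1 : evaln (tN c n) c n = some (encode s) := evaln_tN hk
  have h2 : n < tN c n := evaln_bound (Option.mem_def.mpr h1)
  refine ⟨tN c n, ?_⟩
  have hne : lfind (fun m => decide (evaln (tN c n) c m = some (encode s)) &&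
      decide (encode (strN m) = m)) (tN c n) ≠ none := by
    intro hnone
    rw [lfind_eq_none] at hnone
    have hcan' : encode (strN n) = n := hcan
    have := hnone n h2
    simp [h1, hcan'] at this
  obtain ⟨m, hm⟩ := Option.ne_none_iff_exists'.mp hne
  exact ⟨(strN m).length + 1, by rw [gF, hm]; rfl⟩

end EMFF

/-- For every prefix-free machine `C` there is a prefix-free machine `D` with
(i) `H_D = H_C`, (ii) every `D⁻¹(s)` finite, and (iii) a partial recursive
`f : {0,1}* →. ℕ⁺` with domain `{s | D⁻¹(s) ≠ ∅}` bounding `#D⁻¹(s)` on its domain. -/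
theorem exists_machine_finite_fibers (C : List Bool →. List Bool) (hC : PFMachine C) :
    ∃ D : List Bool →. List Bool, PFMachine D ∧
      (∀ s, Hm D s = Hm C s) ∧
      (∀ s, {p : List Bool | s ∈ D p}.Finite) ∧
      ∃ f : List Bool →. ℕ, Partrec f ∧
        (∀ s, ∀ k ∈ f s, 0 < k) ∧
        f.Dom = {s | ∃ p, s ∈ D p} ∧
        (∀ s, ∀ k ∈ f s, {p : List Bool | s ∈ D p}.ncard ≤ k) := by

  classical
  obtain ⟨c, hc⟩ := Nat.Partrec.Code.exists_code.mp hC.1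
  have hcanon_eval : ∀ m : ℕ, EMFF.Canon m →
      Nat.Partrec.Code.eval c m = (C (EMFF.strN m)).map Encodable.encode := by
    intro m hm
    have hdec : (Encodable.decode (α := List Bool) m) = some (EMFF.strN m) := by
      conv_lhs => rw [← hm]
      exact Encodable.encodek _
    rw [hc]
    simp [hdec]
  have hmemCH : ∀ (s : List Bool) (m : ℕ), EMFF.Canon m →
      (s ∈ C (EMFF.strN m) ↔
        ∃ k, Nat.Partrec.Code.evaln k c m = some (Encodable.encode s)) := by
    intro s m hm
    constructor
    · intro h
      have h1 : Encodable.encode s ∈ Nat.Partrec.Code.eval c m := by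
        rw [hcanon_eval m hm]
        exact Part.mem_map _ h
      rw [Nat.Partrec.Code.evaln_complete] at h1
      obtain ⟨k, hk⟩ := h1
      exact ⟨k, Option.mem_def.mp hk⟩
    · rintro ⟨k, hk⟩
      have h1 : Encodable.encode s ∈ Nat.Partrec.Code.eval c m :=
        Nat.Partrec.Code.evaln_complete.mpr ⟨k, Option.mem_def.mpr hk⟩
      rw [hcanon_eval m hm, Part.mem_map_iff] at h1
      obtain ⟨s', hs', he⟩ := h1
      rwa [Encodable.encode_injective he] at hs'
  have hmemC : ∀ (s p : List Bool), s ∈ C p ↔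
      EMFF.HaltV c (Encodable.encode s) (Encodable.encode p) := by
    intro s p
    have h := hmemCH s (Encodable.encode p) (EMFF.canon_encode p)
    rw [EMFF.strN_encode] at h
    exact ⟨fun h' => ⟨h.mp h', EMFF.canon_encode p⟩, fun ⟨h', _⟩ => h.mpr h'⟩
  have hDsubC : ∀ (s p : List Bool), s ∈ EMFF.Dm c p → s ∈ C p := by
    intro s p h
    obtain ⟨v, hev, hacc, hs⟩ := EMFF.mem_Dm_iff'.mp h
    have h1 : v ∈ Nat.Partrec.Code.eval c (Encodable.encode p) :=
      Nat.Partrec.Code.evaln_sound (Option.mem_def.mpr hev)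
    rw [hcanon_eval _ (EMFF.canon_encode p), EMFF.strN_encode, Part.mem_map_iff] at h1
    obtain ⟨s', hs', rfl⟩ := h1
    rw [hs, EMFF.strN_encode]
    exact hs'
  have hmemD : ∀ (s p : List Bool), s ∈ EMFF.Dm c p ↔
      (Nat.Partrec.Code.evaln (EMFF.tN c (Encodable.encode p)) c (Encodable.encode p)
        = some (Encodable.encode s) ∧
       EMFF.accb c (EMFF.tN c (Encodable.encode p)) (Encodable.encode p)
        (Encodable.encode s) = true) := by
    intro s p
    constructor
    · intro h
      have hCp : s ∈ C p := hDsubC s p h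
      obtain ⟨v, hev, hacc, hs⟩ := EMFF.mem_Dm_iff'.mp h
      have h1 : v ∈ (C p).map Encodable.encode := by
        rw [← EMFF.strN_encode p, ← hcanon_eval _ (EMFF.canon_encode p)]
        exact Nat.Partrec.Code.evaln_sound (Option.mem_def.mpr hev)
      have h2 : Encodable.encode s ∈ (C p).map Encodable.encode := Part.mem_map _ hCp
      have hv : v = Encodable.encode s := Part.mem_unique h1 h2
      rw [hv] at hev hacc
      exact ⟨hev, hacc⟩
    · rintro ⟨h1, h2⟩
      exact EMFF.mem_Dm_iff'.mpr ⟨_, h1, h2, (EMFF.strN_encode s).symm⟩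
  have hlen_lt : ∀ (s q : List Bool) (m : ℕ), s ∈ EMFF.Dm c q →
      EMFF.HaltV c (Encodable.encode s) m → EMFF.Prec c m (Encodable.encode q) →
      q.length < (EMFF.strN m).length := by
    intro s q m hq hm hprec
    have h := (hmemD s q).mp hq
    have h2 := EMFF.acc_length_lt h.2 hm hprec
    rwa [EMFF.strN_encode] at h2
  have hinj : ∀ s : List Bool, Set.InjOn List.length {p | s ∈ EMFF.Dm c p} := by
    intro s q1 h1 q2 h2 heq
    by_contra hne
    have hen : Encodable.encode q1 ≠ Encodable.encode q2 :=
      fun h => hne (Encodable.encode_injective h)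
    have hH1 : EMFF.HaltV c (Encodable.encode s) (Encodable.encode q1) :=
      (hmemC s q1).mp (hDsubC s q1 h1)
    have hH2 : EMFF.HaltV c (Encodable.encode s) (Encodable.encode q2) :=
      (hmemC s q2).mp (hDsubC s q2 h2)
    rcases EMFF.prec_total hen with hp | hp
    · have h3 := hlen_lt s q2 _ h2 hH1 hp
      rw [EMFF.strN_encode] at h3
      omega
    · have h3 := hlen_lt s q1 _ h1 hH2 hp
      rw [EMFF.strN_encode] at h3
      omega
  have hbound : ∀ (s : List Bool) (n : ℕ), EMFF.HaltV c (Encodable.encode s) n →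
      (∀ m, EMFF.HaltV c (Encodable.encode s) m → ¬EMFF.Prec c m n) →
      ∀ q ∈ {p | s ∈ EMFF.Dm c p}, q.length ≤ (EMFF.strN n).length := by
    intro s n hn hmin q hq
    by_cases hqn : Encodable.encode q = n
    · have hq' : EMFF.strN n = q := by rw [← hqn, EMFF.strN_encode]
      rw [hq']
    · have hHq : EMFF.HaltV c (Encodable.encode s) (Encodable.encode q) :=
        (hmemC s q).mp (hDsubC s q hq)
      have hp : EMFF.Prec c n (Encodable.encode q) := by
        rcases EMFF.prec_total hqn with hp | hp
        · exact absurd hp (hmin _ hHq)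
        · exact hp
      exact le_of_lt (hlen_lt s q n hq hn hp)
  have hfin : ∀ s : List Bool, {p : List Bool | s ∈ EMFF.Dm c p}.Finite := by
    intro s
    by_cases hne : ∃ p, s ∈ EMFF.Dm c p
    · obtain ⟨p₀, hp₀⟩ := hne
      obtain ⟨n₀, hn₀, hmin₀⟩ := EMFF.exists_prec_min (c := c)
        (S := {n | EMFF.HaltV c (Encodable.encode s) n})
        ⟨Encodable.encode p₀, (hmemC s p₀).mp (hDsubC s p₀ hp₀)⟩
      refine Set.Finite.of_finite_image ?_ (hinj s)
      refine Set.Finite.subset (Set.finite_Iic (EMFF.strN n₀).length) ?_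
      rintro x ⟨q, hq, rfl⟩
      exact hbound s n₀ hn₀ hmin₀ q hq
    · push_neg at hne
      have he : {p : List Bool | s ∈ EMFF.Dm c p} = ∅ :=
        Set.eq_empty_iff_forall_notMem.mpr hne
      rw [he]
      exact Set.finite_empty
  have hncard : ∀ (s : List Bool) (n : ℕ), EMFF.HaltV c (Encodable.encode s) n →
      (∀ m, EMFF.HaltV c (Encodable.encode s) m → ¬EMFF.Prec c m n) →
      {p : List Bool | s ∈ EMFF.Dm c p}.ncard ≤ (EMFF.strN n).length + 1 := by
    intro s n hn hmin
    calc {p : List Bool | s ∈ EMFF.Dm c p}.ncard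
        = (List.length '' {p : List Bool | s ∈ EMFF.Dm c p}).ncard :=
          (Set.ncard_image_of_injOn (hinj s)).symm
      _ ≤ (Set.Iic (EMFF.strN n).length).ncard := by
          apply Set.ncard_le_ncard ?_ (Set.finite_Iic _)
          rintro x ⟨q, hq, rfl⟩
          exact hbound s n hn hmin q hq
      _ = (EMFF.strN n).length + 1 := by
          rw [← Finset.coe_Iic, Set.ncard_coe_finset, Nat.card_Iic]
  refine ⟨EMFF.Dm c, ⟨EMFF.Dm_partrec c, ?_⟩, ?_, hfin, EMFF.Fm c, EMFF.Fm_partrec c,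
    ?_, ?_, ?_⟩
  · -- prefix-free domain
    intro p hp q hq hpre
    obtain ⟨s1, hs1⟩ := (PFun.mem_dom _ _).mp hp
    obtain ⟨s2, hs2⟩ := (PFun.mem_dom _ _).mp hq
    exact hC.2 p ((PFun.mem_dom _ _).mpr ⟨s1, hDsubC s1 p hs1⟩) q
      ((PFun.mem_dom _ _).mpr ⟨s2, hDsubC s2 q hs2⟩) hpre
  · -- Hm equality
    intro s
    have hsub : Hm C s ≤ Hm (EMFF.Dm c) s :=
      sInf_le_sInf (Set.image_mono fun p hp => hDsubC s p hp)
    refine le_antisymm ?_ hsub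
    by_cases hne : ∃ p, s ∈ C p
    · obtain ⟨p0, hp0⟩ := hne
      have hSl : (List.length '' {p | s ∈ C p}).Nonempty := ⟨p0.length, p0, hp0, rfl⟩
      obtain ⟨pL, hpL, hpLlen⟩ := Nat.sInf_mem hSl
      set L := sInf (List.length '' {p | s ∈ C p}) with hLdef
      obtain ⟨n₁, hn₁, hmin₁⟩ := EMFF.exists_prec_min (c := c)
        (S := {n | EMFF.HaltV c (Encodable.encode s) n ∧ (EMFF.strN n).length = L})
        ⟨Encodable.encode pL, (hmemC s pL).mp hpL, by rw [EMFF.strN_encode]; exact hpLlen⟩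
      obtain ⟨hn₁H, hn₁L⟩ := hn₁
      have hmem : s ∈ EMFF.Dm c (EMFF.strN n₁) := by
        obtain ⟨⟨k, hk⟩, hcan⟩ := hn₁H
        rw [hmemD]
        have hcn : Encodable.encode (EMFF.strN n₁) = n₁ := hcan
        rw [hcn]
        refine ⟨EMFF.evaln_tN hk, EMFF.accb_of fun m hm hp => ?_⟩
        have hmC : s ∈ C (EMFF.strN m) := (hmemCH s m hm.2).mpr hm.1
        have hge : L ≤ (EMFF.strN m).length := Nat.sInf_le ⟨EMFF.strN m, hmC, rfl⟩
        rw [hn₁L]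
        rcases lt_or_eq_of_le hge with h | h
        · exact h
        · exact absurd hp (hmin₁ m ⟨hm, h.symm⟩)
      have h1 : Hm (EMFF.Dm c) s ≤ (((EMFF.strN n₁).length : ℕ) : ℕ∞) :=
        sInf_le ⟨EMFF.strN n₁, hmem, rfl⟩
      rw [hn₁L] at h1
      refine le_trans h1 (le_sInf ?_)
      rintro x ⟨q, hq, rfl⟩
      show (L : ℕ∞) ≤ ((q.length : ℕ) : ℕ∞)
      have h3 : L ≤ q.length := Nat.sInf_le ⟨q, hq, rfl⟩
      exact_mod_cast h3
    · push_neg at hne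
      have he : {p : List Bool | s ∈ C p} = ∅ :=
        Set.eq_empty_iff_forall_notMem.mpr hne
      simp only [Hm, he, Set.image_empty, sInf_empty]
      exact le_top
  · -- positivity
    intro s k hk
    obtain ⟨n, _, _, rfl⟩ := EMFF.Fm_spec hk
    exact Nat.succ_pos _
  · -- domain of f
    ext s
    simp only [PFun.mem_dom, Set.mem_setOf_eq]
    constructor
    · rintro ⟨a, ha⟩
      obtain ⟨n, h1, h2, _⟩ := EMFF.Fm_spec ha
      exact ⟨EMFF.strN n, EMFF.mem_Dm_of_prec_min h1 h2⟩
    · rintro ⟨p, hp⟩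
      have hd := EMFF.Fm_dom_of (c := c) (s := s) (n := Encodable.encode p)
        ((hmemC s p).mp (hDsubC s p hp))
      obtain ⟨a, ha⟩ := Part.dom_iff_mem.mp hd
      exact ⟨a, ha⟩
  · -- cardinality bound
    intro s k hk
    obtain ⟨n, h1, h2, rfl⟩ := EMFF.Fm_spec hk
    exact hncard s n h1 h2
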